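/- arXiv:2008.03566 — 7 statements merged into one kernel-verified Lean document; each statement's English description precedes it below -/
import Mathlib

section
/- Let h : ℝ → ℝ be a C² function with h″(ψ) + h(ψ) > 0 for all ψ, and define S(φ, φ₁) = 2·h((φ + φ₁)/2)·sin((φ₁ − φ)/2). Then for all φ, φ₁ with 0 < (φ₁ − φ)/2 < π, the mixed second partial derivative satisfies ∂²S/∂φ∂φ₁ (φ, φ₁) = (1/2)·(h″(ψ) + h(ψ))·sin δ > 0, where ψ = (φ + φ₁)/2 and δ = (φ₁ − φ)/2. -/
open Real

/-- The non-standard generating function for the billiard ball map: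
`S(φ, φ₁) = 2 h((φ+φ₁)/2) sin((φ₁−φ)/2)`. -/
noncomputable def Sgen (h : ℝ → ℝ) (φ φ₁ : ℝ) : ℝ :=
  2 * h ((φ + φ₁) / 2) * Real.sin ((φ₁ - φ) / 2)

lemma inner_deriv (h : ℝ → ℝ) (hh : Differentiable ℝ h) (x y : ℝ) :
    deriv (fun y => Sgen h x y) y
      = deriv h ((x + y) / 2) * Real.sin ((y - x) / 2)
        + h ((x + y) / 2) * Real.cos ((y - x) / 2) := by
  have h1 : HasDerivAt (fun y : ℝ => (x + y) / 2) (1 / 2) y := by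
    simpa using ((hasDerivAt_id y).const_add x).div_const 2
  have h2 : HasDerivAt (fun y => h ((x + y) / 2)) (deriv h ((x + y) / 2) * (1 / 2)) y :=
    ((hh ((x + y) / 2)).hasDerivAt).comp y h1
  have h3 : HasDerivAt (fun y : ℝ => (y - x) / 2) (1 / 2) y := by
    simpa using ((hasDerivAt_id y).sub_const x).div_const 2
  have h4 : HasDerivAt (fun y => Real.sin ((y - x) / 2)) (Real.cos ((y - x) / 2) * (1 / 2)) y :=
    (Real.hasDerivAt_sin _).comp y h3
  have := ((h2.const_mul 2).mul h4)
  have h5 : HasDerivAt (fun y => Sgen h x y)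
      (2 * (deriv h ((x + y) / 2) * (1 / 2)) * Real.sin ((y - x) / 2)
        + 2 * h ((x + y) / 2) * (Real.cos ((y - x) / 2) * (1 / 2))) y := by
    simpa [Sgen, mul_assoc, Pi.mul_def] using this
  rw [h5.deriv]; ring

/-- Twist condition: if the radius of curvature `h'' + h` is positive, then the mixed
second partial derivative of `S` equals `(1/2)(h''(ψ)+h(ψ)) sin δ` and is positive for
`0 < δ < π`. -/
theorem stmt_2 (h : ℝ → ℝ) (hh : ContDiff ℝ 2 h)
    (hρ : ∀ ψ : ℝ, deriv (deriv h) ψ + h ψ > 0)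
    (φ φ₁ : ℝ) (hδ₀ : 0 < (φ₁ - φ)/2) (hδπ : (φ₁ - φ)/2 < Real.pi) :
    deriv (fun x => deriv (fun y => Sgen h x y) φ₁) φ
      = (1/2) * (deriv (deriv h) ((φ + φ₁)/2) + h ((φ + φ₁)/2)) * Real.sin ((φ₁ - φ)/2) ∧
    0 < deriv (fun x => deriv (fun y => Sgen h x y) φ₁) φ := by
  have hd1 : Differentiable ℝ h := hh.differentiable (by norm_num)
  have hh' : ContDiff ℝ 1 (deriv h) := by
    have hh2 : ContDiff ℝ ((1 : WithTop ℕ∞) + 1) h := by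
      rw [show (1 : WithTop ℕ∞) + 1 = 2 by norm_num]; exact hh
    exact (contDiff_succ_iff_deriv.mp hh2).2.2
  have hd2 : Differentiable ℝ (deriv h) := hh'.differentiable one_ne_zero
  have key : deriv (fun x => deriv (fun y => Sgen h x y) φ₁) φ
      = (1/2) * (deriv (deriv h) ((φ + φ₁)/2) + h ((φ + φ₁)/2)) * Real.sin ((φ₁ - φ)/2) := by
    have heq : (fun x => deriv (fun y => Sgen h x y) φ₁)
        = fun x => deriv h ((x + φ₁) / 2) * Real.sin ((φ₁ - x) / 2)
            + h ((x + φ₁) / 2) * Real.cos ((φ₁ - x) / 2) := by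
      funext x; exact inner_deriv h hd1 x φ₁
    rw [heq]
    have h1 : HasDerivAt (fun x : ℝ => (x + φ₁) / 2) (1 / 2) φ := by
      simpa using ((hasDerivAt_id φ).add_const φ₁).div_const 2
    have h3 : HasDerivAt (fun x : ℝ => (φ₁ - x) / 2) (-1 / 2) φ :=
      ((hasDerivAt_id φ).const_sub φ₁).div_const 2
    have h2 : HasDerivAt (fun x => deriv h ((x + φ₁) / 2))
        (deriv (deriv h) ((φ + φ₁) / 2) * (1 / 2)) φ :=
      by have := ((hd2 ((φ + φ₁) / 2)).hasDerivAt).comp φ h1; exact this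
    have h2' : HasDerivAt (fun x => h ((x + φ₁) / 2))
        (deriv h ((φ + φ₁) / 2) * (1 / 2)) φ :=
      ((hd1 ((φ + φ₁) / 2)).hasDerivAt).comp φ h1
    have h4 : HasDerivAt (fun x => Real.sin ((φ₁ - x) / 2))
        (Real.cos ((φ₁ - φ) / 2) * (-1 / 2)) φ :=
      (Real.hasDerivAt_sin _).comp φ h3
    have h5 : HasDerivAt (fun x => Real.cos ((φ₁ - x) / 2))
        (-Real.sin ((φ₁ - φ) / 2) * (-1 / 2)) φ :=
      (Real.hasDerivAt_cos _).comp φ h3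
    have h6 := (h2.mul h4).add (h2'.mul h5)
    rw [HasDerivAt.deriv (f := fun x => deriv h ((x + φ₁) / 2) * Real.sin ((φ₁ - x) / 2)
        + h ((x + φ₁) / 2) * Real.cos ((φ₁ - x) / 2)) h6]; ring
  refine ⟨key, ?_⟩
  rw [key]
  have hs : 0 < Real.sin ((φ₁ - φ)/2) := Real.sin_pos_of_pos_of_lt_pi hδ₀ hδπ
  have := hρ ((φ + φ₁)/2)
  positivity
end

section
/- Let h : ℝ → ℝ be a C¹ function with h(ψ) > 0 for all ψ, and let d : ℝ → ℝ satisfy 0 < d(ψ) < π/2 and d(ψ + π/2) = π/2 − d(ψ) for all ψ. Assume that for all ψ: h(ψ)·cos d(ψ) + h′(ψ)·sin d(ψ) = h(ψ + π/2)·cos d(ψ + π/2) − h′(ψ + π/2)·sin d(ψ + π/2), and h(ψ)·cos d(ψ) − h′(ψ)·sin d(ψ) = h(ψ + π/2)·cos d(ψ + π/2) + h′(ψ + π/2)·sin d(ψ + π/2). Then for all ψ: (i) h(ψ + π/2)·sin d(ψ) = h(ψ)·cos d(ψ); (ii) h′(ψ)·sin d(ψ) = −h′(ψ + π/2)·cos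 d(ψ); and (iii) there exists a constant R² such that h(ψ)² + h(ψ + π/2)² = R² for all ψ. -/
open Real

/-- From the two generating-function relations for the sides of the inscribed billiard
parallelogram one deduces the identities of Theorem 4(D). -/
theorem stmt_4 (h d : ℝ → ℝ) (hh : ContDiff ℝ 1 h)
    (hpos : ∀ ψ : ℝ, 0 < h ψ)
    (hd : ∀ ψ : ℝ, 0 < d ψ ∧ d ψ < Real.pi / 2)
    (hdsym : ∀ ψ : ℝ, d (ψ + Real.pi / 2) = Real.pi / 2 - d ψ)
    (heq1 : ∀ ψ : ℝ,
      h ψ * Real.cos (d ψ) + deriv h ψ * Real.sin (d ψ)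
        = h (ψ + Real.pi / 2) * Real.cos (d (ψ + Real.pi / 2))
          - deriv h (ψ + Real.pi / 2) * Real.sin (d (ψ + Real.pi / 2)))
    (heq2 : ∀ ψ : ℝ,
      h ψ * Real.cos (d ψ) - deriv h ψ * Real.sin (d ψ)
        = h (ψ + Real.pi / 2) * Real.cos (d (ψ + Real.pi / 2))
          + deriv h (ψ + Real.pi / 2) * Real.sin (d (ψ + Real.pi / 2))) :
    (∀ ψ : ℝ, h (ψ + Real.pi / 2) * Real.sin (d ψ) = h ψ * Real.cos (d ψ)) ∧
    (∀ ψ : ℝ, deriv h ψ * Real.sin (d ψ) = -(deriv h (ψ + Real.pi / 2)) * Real.cos (d ψ)) ∧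
    (∃ R2 : ℝ, ∀ ψ : ℝ, (h ψ) ^ 2 + (h (ψ + Real.pi / 2)) ^ 2 = R2) := by
  have hcos : ∀ ψ : ℝ, Real.cos (d (ψ + Real.pi / 2)) = Real.sin (d ψ) := by
    intro ψ; rw [hdsym, Real.cos_pi_div_two_sub]
  have hsin : ∀ ψ : ℝ, Real.sin (d (ψ + Real.pi / 2)) = Real.cos (d ψ) := by
    intro ψ; rw [hdsym, Real.sin_pi_div_two_sub]
  have hi : ∀ ψ : ℝ, h (ψ + Real.pi / 2) * Real.sin (d ψ) = h ψ * Real.cos (d ψ) := by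
    intro ψ
    have e1 := heq1 ψ; have e2 := heq2 ψ
    rw [hcos, hsin] at e1 e2
    linarith
  have hii : ∀ ψ : ℝ, deriv h ψ * Real.sin (d ψ)
      = -(deriv h (ψ + Real.pi / 2)) * Real.cos (d ψ) := by
    intro ψ
    have e1 := heq1 ψ; have e2 := heq2 ψ
    rw [hcos, hsin] at e1 e2
    linarith
  refine ⟨hi, hii, ?_⟩
  have hdiff : Differentiable ℝ h := hh.differentiable one_ne_zero
  set F : ℝ → ℝ := fun ψ => (h ψ) ^ 2 + (h (ψ + Real.pi / 2)) ^ 2 with hF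
  have hFdiff : Differentiable ℝ F := by
    apply Differentiable.add
    · exact (hdiff.pow 2)
    · exact ((hdiff.comp (differentiable_id.add_const _)).pow 2)
  have hFderiv : ∀ ψ : ℝ, deriv F ψ = 0 := by
    intro ψ
    have hsp : 0 < Real.sin (d ψ) := Real.sin_pos_of_pos_of_lt_pi (hd ψ).1
      (lt_trans (hd ψ).2 (by linarith [Real.pi_pos]))
    have hcp : 0 < Real.cos (d ψ) := Real.cos_pos_of_mem_Ioo
      ⟨lt_trans (by linarith [Real.pi_pos]) (hd ψ).1, (hd ψ).2⟩
    have h2 : HasDerivAt (fun ψ : ℝ => h (ψ + Real.pi / 2))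
        (deriv h (ψ + Real.pi / 2)) ψ := by
      have := ((hdiff (ψ + Real.pi / 2)).hasDerivAt).comp ψ
        ((hasDerivAt_id ψ).add_const (Real.pi / 2))
      simpa [Function.comp_def] using this
    have hFd : HasDerivAt F
        (2 * h ψ * deriv h ψ + 2 * h (ψ + Real.pi / 2) * deriv h (ψ + Real.pi / 2)) ψ := by
      have t1 : HasDerivAt (fun ψ => (h ψ) ^ 2) (2 * h ψ * deriv h ψ) ψ := by
        simpa [mul_comm, mul_assoc, mul_left_comm] using ((hdiff ψ).hasDerivAt).fun_pow 2
      have t2 : HasDerivAt (fun ψ : ℝ => (h (ψ + Real.pi / 2)) ^ 2)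
          (2 * h (ψ + Real.pi / 2) * deriv h (ψ + Real.pi / 2)) ψ := by
        simpa [mul_comm, mul_assoc, mul_left_comm] using h2.fun_pow 2
      exact t1.add t2
    rw [hFd.deriv]
    -- key: h ψ * deriv h ψ + h₂ * deriv h₂ = 0
    have key : h ψ * deriv h ψ + h (ψ + Real.pi / 2) * deriv h (ψ + Real.pi / 2) = 0 := by
      have e1 := hi ψ
      have e2 := hii ψ
      have hmul : (h ψ * deriv h ψ + h (ψ + Real.pi / 2) * deriv h (ψ + Real.pi / 2))
          * (Real.sin (d ψ) * Real.cos (d ψ)) = 0 := by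
        calc (h ψ * deriv h ψ + h (ψ + Real.pi / 2) * deriv h (ψ + Real.pi / 2))
            * (Real.sin (d ψ) * Real.cos (d ψ))
            = (deriv h ψ * Real.sin (d ψ)) * (h ψ * Real.cos (d ψ))
              + (h (ψ + Real.pi / 2) * Real.sin (d ψ))
                * (deriv h (ψ + Real.pi / 2) * Real.cos (d ψ)) := by ring
          _ = 0 := by rw [e1, e2]; ring
      have hne : Real.sin (d ψ) * Real.cos (d ψ) ≠ 0 := by positivity
      exact (mul_eq_zero.mp hmul).resolve_right hne
    linarith
  refine ⟨F 0, fun ψ => ?_⟩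
  exact is_const_of_deriv_eq_zero hFdiff hFderiv ψ 0
end

section
/- Let R > 0 and let d : ℝ → ℝ be a C² function satisfying d(ψ + π/2) = π/2 − d(ψ) for all ψ. Set h = R·(sin ∘ d), μ(ψ) = cos(2·d(ψ)), and define U(ψ) = −h(ψ)·h′(ψ)²·(h(ψ) + h″(ψ))·(d(ψ)/2 − sin(2·d(ψ))/4) + (h″(ψ)·h(ψ)² + 3·h(ψ)·h′(ψ)²)·(h(ψ) + h″(ψ))·(d(ψ)/8 − sin(4·d(ψ))/32). Then ∫₀^π U(ψ) dψ = (π·R⁴/512)·∫₀^π (μ″(ψ)² − 4·μ′(ψ)²) dψ. -/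
open Real

/-- The key identity of the paper: the integral of the total-integrability integrand `U`
equals `(π R⁴ / 512) ∫₀^π (μ''² − 4 μ'²)` with `μ = cos (2 d)`. -/
theorem stmt_8 (R : ℝ) (hR : 0 < R) (d : ℝ → ℝ) (hd : ContDiff ℝ 2 d)
    (hdsym : ∀ ψ : ℝ, d (ψ + Real.pi / 2) = Real.pi / 2 - d ψ)
    (h : ℝ → ℝ) (hh : h = fun ψ => R * Real.sin (d ψ))
    (μ : ℝ → ℝ) (hμ : μ = fun ψ => Real.cos (2 * d ψ))
    (U : ℝ → ℝ)
    (hU : ∀ ψ : ℝ, U ψ =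
      -(h ψ * (deriv h ψ) ^ 2 * (h ψ + deriv (deriv h) ψ))
          * (d ψ / 2 - Real.sin (2 * d ψ) / 4)
        + (deriv (deriv h) ψ * (h ψ) ^ 2 + 3 * h ψ * (deriv h ψ) ^ 2)
          * (h ψ + deriv (deriv h) ψ)
          * (d ψ / 8 - Real.sin (4 * d ψ) / 32)) :
    ∫ ψ in (0:ℝ)..Real.pi, U ψ
      = (Real.pi * R ^ 4 / 512)
        * ∫ ψ in (0:ℝ)..Real.pi, ((deriv (deriv μ) ψ) ^ 2 - 4 * (deriv μ ψ) ^ 2) := by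
  subst hh; subst hμ
  -- basic regularity
  have hd_diff : Differentiable ℝ d := hd.differentiable (by norm_num)
  have hd1 : ContDiff ℝ 1 (deriv d) := by
    have h2 : ContDiff ℝ (1+1 : ℕ) d := by exact_mod_cast hd
    exact (contDiff_succ_iff_deriv.mp (by exact_mod_cast h2)).2.2
  have hp_diff : Differentiable ℝ (deriv d) := hd1.differentiable one_ne_zero
  have hdc : Continuous d := hd.continuous
  have hp_cont : Continuous (deriv d) := hd1.continuous
  have hq_cont : Continuous (deriv (deriv d)) := hd1.continuous_deriv le_rfl
  have Hd : ∀ t : ℝ, HasDerivAt d (deriv d t) t := fun t => (hd_diff t).hasDerivAt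
  have Hp : ∀ t : ℝ, HasDerivAt (deriv d) (deriv (deriv d) t) t := fun t => (hp_diff t).hasDerivAt
  have Hs : ∀ t : ℝ, HasDerivAt (fun u => Real.sin (d u)) (Real.cos (d t) * deriv d t) t :=
    fun t => (Real.hasDerivAt_sin (d t)).comp t (Hd t)
  have Hc : ∀ t : ℝ, HasDerivAt (fun u => Real.cos (d u)) (-Real.sin (d t) * deriv d t) t :=
    fun t => (Real.hasDerivAt_cos (d t)).comp t (Hd t)
  -- derivatives of h
  have hDh : deriv (fun u => R * Real.sin (d u)) = fun t => R * (Real.cos (d t) * deriv d t) :=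
    funext fun t => ((Hs t).const_mul R).deriv
  have hDDh : deriv (deriv (fun u => R * Real.sin (d u)))
      = fun t => R * (-Real.sin (d t) * deriv d t * deriv d t
          + Real.cos (d t) * deriv (deriv d) t) := by
    rw [hDh]
    exact funext fun t => (((Hc t).mul (Hp t)).const_mul R).deriv
  -- derivatives of μ
  have hDm : deriv (fun u => Real.cos (2 * d u))
      = fun t => -Real.sin (2 * d t) * (2 * deriv d t) := by
    refine funext fun t => HasDerivAt.deriv ?_
    exact (Real.hasDerivAt_cos (2 * d t)).comp t ((Hd t).const_mul 2)
  have hDDm : deriv (deriv (fun u => Real.cos (2 * d u)))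
      = fun t => -(Real.cos (2 * d t) * (2 * deriv d t)) * (2 * deriv d t)
          + -Real.sin (2 * d t) * (2 * deriv (deriv d) t) := by
    rw [hDm]
    refine funext fun t => HasDerivAt.deriv ?_
    exact (((Real.hasDerivAt_sin (2 * d t)).comp t ((Hd t).const_mul 2)).neg).mul
      ((Hp t).const_mul 2)
  have hDDh' : deriv (fun t => R * (Real.cos (d t) * deriv d t))
      = fun t => R * (-Real.sin (d t) * deriv d t * deriv d t
          + Real.cos (d t) * deriv (deriv d) t) :=
    funext fun t => (((Hc t).mul (Hp t)).const_mul R).deriv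
  have hDDm' : deriv (fun t => -Real.sin (2 * d t) * (2 * deriv d t))
      = fun t => -(Real.cos (2 * d t) * (2 * deriv d t)) * (2 * deriv d t)
          + -Real.sin (2 * d t) * (2 * deriv (deriv d) t) := by
    refine funext fun t => HasDerivAt.deriv ?_
    exact (((Real.hasDerivAt_sin (2 * d t)).comp t ((Hd t).const_mul 2)).neg).mul
      ((Hp t).const_mul 2)
  -- symmetry of derivatives
  have hp_sym : ∀ t : ℝ, deriv d (t + Real.pi / 2) = -deriv d t := by
    intro t
    have h1 : HasDerivAt (fun u => d (u + Real.pi / 2)) (deriv d (t + Real.pi / 2)) t := by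
      exact ((Hd (t + Real.pi / 2)).comp t ((hasDerivAt_id t).add_const (Real.pi / 2))).congr_deriv (mul_one _)
    have h2 : HasDerivAt (fun u => Real.pi / 2 - d u) (-deriv d t) t := (Hd t).const_sub _
    have he : (fun u => d (u + Real.pi / 2)) = fun u => Real.pi / 2 - d u := funext hdsym
    rw [he] at h1
    exact h1.unique h2
  have hq_sym : ∀ t : ℝ, deriv (deriv d) (t + Real.pi / 2) = -deriv (deriv d) t := by
    intro t
    have h1 : HasDerivAt (fun u => deriv d (u + Real.pi / 2))
        (deriv (deriv d) (t + Real.pi / 2)) t := by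
      exact ((Hp (t + Real.pi / 2)).comp t ((hasDerivAt_id t).add_const (Real.pi / 2))).congr_deriv (mul_one _)
    have h2 : HasDerivAt (fun u => -deriv d u) (-deriv (deriv d) t) t := (Hp t).neg
    have he : (fun u => deriv d (u + Real.pi / 2)) = fun u => -deriv d u := funext hp_sym
    rw [he] at h1
    exact h1.unique h2
  -- periodicity
  have hd_per : ∀ t : ℝ, d (t + Real.pi) = d t := by
    intro t
    rw [show t + Real.pi = t + Real.pi / 2 + Real.pi / 2 by ring, hdsym, hdsym]
    ring
  have hp_per : ∀ t : ℝ, deriv d (t + Real.pi) = deriv d t := by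
    intro t
    rw [show t + Real.pi = t + Real.pi / 2 + Real.pi / 2 by ring, hp_sym, hp_sym, neg_neg]
  have hq_per : ∀ t : ℝ, deriv (deriv d) (t + Real.pi) = deriv (deriv d) t := by
    intro t
    rw [show t + Real.pi = t + Real.pi / 2 + Real.pi / 2 by ring, hq_sym, hq_sym, neg_neg]
  -- rewrite the μ-integrand explicitly
  simp only [hDm, hDDm']
  -- the antiderivative Φ and its derivative
  set PhiD : ℝ → ℝ := fun t =>
    (1/8) * (Real.cos (d t))^2 * deriv (deriv d) t * (R)^4 + (1/8) * (Real.cos (d t))^2 * (deriv d t)^2 * d t * (R)^4 + (-3/8) * (Real.cos (d t))^2 * (deriv d t)^2 * deriv (deriv d) t * (R)^4 + (1/16) * (Real.cos (d t))^2 * (deriv d t)^4 * Real.pi * (R)^4 + (-1/8) * (Real.cos (d t))^2 * (deriv d t)^4 * d t * (R)^4 + (-3/8) * (Real.cos (d t))^4 * deriv (deriv d) t * (R)^4 + (-1/16) * (Real.cos (d t))^4 * (deriv d t)^2 * Real.pi * (R)^4 + (9/8) * (Real.cos (d t))^4 * (deriv d t)^2 * deriv (deriv d) t * (R)^4 + (-1/16)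 * (Real.cos (d t))^4 * (deriv d t)^4 * Real.pi * (R)^4 + (1/4) * (Real.cos (d t))^6 * deriv (deriv d) t * (R)^4 + (-3/4) * (Real.cos (d t))^6 * (deriv d t)^2 * deriv (deriv d) t * (R)^4 + (1/8) * Real.sin (d t) * Real.cos (d t) * deriv (deriv d) t * d t * (R)^4 + (-1/8) * Real.sin (d t) * Real.cos (d t) * (deriv d t)^2 * (R)^4 + (3/16) * Real.sin (d t) * Real.cos (d t) * (deriv d t)^2 * deriv (deriv d) t * Real.pi * (R)^4 + (-3/8) * Real.sin (d t) * Real.cos (d t) * (deriv d t)^2 * deriv (deriv d) t * d t * (R)^4 + (1/8) * Real.sin (d t) * Real.cos (d t) * (deriv d t)^4 * (R)^4 + (-1/16) * Real.sin (d t) * (Real.cos (d t))^3 * deriv (deriv d) t * Real.pi * (R)^4 + (3/2) * Real.sin (d t) * (Real.cos (d t))^3 * (deriv d t)^2 * (R)^4 + (-3/16) * Real.sin (d t) * (Real.cos (d t))^3 * (deriv d t)^2 * deriv (deriv d) t * Real.pi * (R)^4 + (-3/2) * Real.sin (d t) * (Real.cos (d t))^3 * (deriv d t)^4 * (R)^4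 + (-3/2) * Real.sin (d t) * (Real.cos (d t))^5 * (deriv d t)^2 * (R)^4 + (3/2) * Real.sin (d t) * (Real.cos (d t))^5 * (deriv d t)^4 * (R)^4 + (-1/8) * (Real.sin (d t))^2 * (deriv d t)^2 * d t * (R)^4 + (-1/16) * (Real.sin (d t))^2 * (deriv d t)^4 * Real.pi * (R)^4 + (1/8) * (Real.sin (d t))^2 * (deriv d t)^4 * d t * (R)^4 + (3/16) * (Real.sin (d t))^2 * (Real.cos (d t))^2 * (deriv d t)^2 * Real.pi * (R)^4 + (3/16) * (Real.sin (d t))^2 * (Real.cos (d t))^2 * (deriv d t)^4 * Real.pi * (R)^4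
    with hPhiD
  have HPhi : ∀ t : ℝ, HasDerivAt (fun u => R ^ 4 *
      ((Real.cos (d u) ^ 2 / 8 - 3 * Real.cos (d u) ^ 4 / 8 + Real.cos (d u) ^ 6 / 4
          + Real.sin (d u) * Real.cos (d u) * d u / 8
          - Real.pi / 16 * (Real.sin (d u) * Real.cos (d u) ^ 3)) * deriv d u
        + (-(Real.cos (d u) ^ 2 / 8) + 3 * Real.cos (d u) ^ 4 / 8 - Real.cos (d u) ^ 6 / 4
          + Real.pi / 16 * (Real.sin (d u) * Real.cos (d u))
          - Real.sin (d u) * Real.cos (d u) * d u / 8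
          - Real.pi / 16 * (Real.sin (d u) * Real.cos (d u) ^ 3)) * (deriv d u) ^ 3))
      (PhiD t) t := by
    intro t
    have hA1 : HasDerivAt (fun u => Real.cos (d u) ^ 2 / 8 - 3 * Real.cos (d u) ^ 4 / 8
        + Real.cos (d u) ^ 6 / 4 + Real.sin (d u) * Real.cos (d u) * d u / 8
        - Real.pi / 16 * (Real.sin (d u) * Real.cos (d u) ^ 3))
        ((2 * Real.cos (d t) ^ 1 * (-Real.sin (d t) * deriv d t)) / 8
          - (3 * (4 * Real.cos (d t) ^ 3 * (-Real.sin (d t) * deriv d t))) / 8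
          + (6 * Real.cos (d t) ^ 5 * (-Real.sin (d t) * deriv d t)) / 4
          + ((Real.cos (d t) * deriv d t * Real.cos (d t)
              + Real.sin (d t) * (-Real.sin (d t) * deriv d t)) * d t
              + Real.sin (d t) * Real.cos (d t) * deriv d t) / 8
          - Real.pi / 16 * (Real.cos (d t) * deriv d t * Real.cos (d t) ^ 3
              + Real.sin (d t) * (3 * Real.cos (d t) ^ 2 * (-Real.sin (d t) * deriv d t)))) t := by
      exact (((((Hc t).pow 2).div_const 8).sub
          ((((Hc t).pow 4).const_mul 3).div_const 8)).add
          (((Hc t).pow 6).div_const 4)).add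
          ((((Hs t).mul (Hc t)).mul (Hd t)).div_const 8) |>.sub
          (((Hs t).mul ((Hc t).pow 3)).const_mul (Real.pi / 16))
    have hA2 : HasDerivAt (fun u => -(Real.cos (d u) ^ 2 / 8) + 3 * Real.cos (d u) ^ 4 / 8
        - Real.cos (d u) ^ 6 / 4 + Real.pi / 16 * (Real.sin (d u) * Real.cos (d u))
        - Real.sin (d u) * Real.cos (d u) * d u / 8
        - Real.pi / 16 * (Real.sin (d u) * Real.cos (d u) ^ 3))
        (-((2 * Real.cos (d t) ^ 1 * (-Real.sin (d t) * deriv d t)) / 8)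
          + (3 * (4 * Real.cos (d t) ^ 3 * (-Real.sin (d t) * deriv d t))) / 8
          - (6 * Real.cos (d t) ^ 5 * (-Real.sin (d t) * deriv d t)) / 4
          + Real.pi / 16 * (Real.cos (d t) * deriv d t * Real.cos (d t)
              + Real.sin (d t) * (-Real.sin (d t) * deriv d t))
          - ((Real.cos (d t) * deriv d t * Real.cos (d t)
              + Real.sin (d t) * (-Real.sin (d t) * deriv d t)) * d t
              + Real.sin (d t) * Real.cos (d t) * deriv d t) / 8
          - Real.pi / 16 * (Real.cos (d t) * deriv d t * Real.cos (d t) ^ 3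
              + Real.sin (d t) * (3 * Real.cos (d t) ^ 2 * (-Real.sin (d t) * deriv d t)))) t := by
      exact (((((((Hc t).pow 2).div_const 8).neg).add
          ((((Hc t).pow 4).const_mul 3).div_const 8)).sub
          (((Hc t).pow 6).div_const 4)).add
          (((Hs t).mul (Hc t)).const_mul (Real.pi / 16))).sub
          ((((Hs t).mul (Hc t)).mul (Hd t)).div_const 8) |>.sub
          (((Hs t).mul ((Hc t).pow 3)).const_mul (Real.pi / 16))
    have H := ((hA1.mul (Hp t)).add (hA2.mul ((Hp t).pow 3))).const_mul (R ^ 4)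
    refine H.congr_deriv ?_
    rw [hPhiD]
    simp only [Pi.pow_apply, Nat.cast_ofNat, show (3:ℕ) - 1 = 2 from rfl]
    ring
  -- pointwise key identity
  have key : ∀ t : ℝ, U t + U (t + Real.pi / 2)
      = Real.pi * R ^ 4 / 256 * ((-(Real.cos (2 * d t) * (2 * deriv d t)) * (2 * deriv d t) + -Real.sin (2 * d t) * (2 * deriv (deriv d) t)) ^ 2 - 4 * (-Real.sin (2 * d t) * (2 * deriv d t)) ^ 2) + PhiD t := by
    intro t
    have e4 : Real.sin (4 * d t)
        = 2 * (2 * Real.sin (d t) * Real.cos (d t)) * (2 * Real.cos (d t) ^ 2 - 1) := by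
      rw [show (4:ℝ) * d t = 2 * (2 * d t) by ring, Real.sin_two_mul, Real.sin_two_mul,
        Real.cos_two_mul]
    have e2' : Real.sin (2 * (Real.pi / 2 - d t)) = 2 * Real.sin (d t) * Real.cos (d t) := by
      rw [show 2 * (Real.pi / 2 - d t) = Real.pi - 2 * d t by ring, Real.sin_pi_sub,
        Real.sin_two_mul]
    have e4' : Real.sin (4 * (Real.pi / 2 - d t))
        = -(2 * (2 * Real.sin (d t) * Real.cos (d t)) * (2 * Real.cos (d t) ^ 2 - 1)) := by
      rw [show 4 * (Real.pi / 2 - d t) = 2 * Real.pi - 4 * d t by ring, Real.sin_sub,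
        Real.sin_two_pi, Real.cos_two_pi, e4]
      ring
    simp only [hU, hDh, hDDh', hdsym, hp_sym, hq_sym, Real.sin_pi_div_two_sub,
      Real.cos_pi_div_two_sub, e2', e4', e4, Real.sin_two_mul, Real.cos_two_mul, hPhiD]
    linear_combination ((1/16) * (deriv d t)^4 * Real.pi * (R)^4 + (1/8) * (Real.cos (d t))^2 * deriv (deriv d) t * (R)^4 + (1/8) * (Real.cos (d t))^2 * (deriv d t)^2 * d t * (R)^4 + (-3/8) * (Real.cos (d t))^2 * (deriv d t)^2 * deriv (deriv d) t * (R)^4 + (-1/8) * (Real.cos (d t))^2 * (deriv d t)^4 * Real.pi * (R)^4 + (-1/8) * (Real.cos (d t))^2 * (deriv d t)^4 * d t * (R)^4 + (-1/4) * (Real.cos (d t))^4 * deriv (deriv d) t * (R)^4 + (3/4) * (Real.cos (d t))^4 * (deriv d t)^2 * deriv (deriv d) t * (R)^4 + (1/8) * Real.sin (d t) * Real.cos (d t) * deriv (deriv d) t * d t * (R)^4 + (-1/8) * Real.sin (d t) * Real.cos (d t) * (deriv d t)^2 * (R)^4 + (1/16) * Real.sin (d t) * Real.cos (d t) * (deriv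 d t)^2 * deriv (deriv d) t * Real.pi * (R)^4 + (-3/8) * Real.sin (d t) * Real.cos (d t) * (deriv d t)^2 * deriv (deriv d) t * d t * (R)^4 + (1/8) * Real.sin (d t) * Real.cos (d t) * (deriv d t)^4 * (R)^4 + (11/8) * Real.sin (d t) * (Real.cos (d t))^3 * (deriv d t)^2 * (R)^4 + (-11/8) * Real.sin (d t) * (Real.cos (d t))^3 * (deriv d t)^4 * (R)^4 + (-1/4) * Real.sin (d t) * (Real.cos (d t))^5 * (deriv d t)^2 * (R)^4 + (1/4) * Real.sin (d t) * (Real.cos (d t))^5 * (deriv d t)^4 * (R)^4 + (-1/8) * (Real.sin (d t))^2 * (deriv d t)^2 * d t * (R)^4 + (1/8) * (Real.sin (d t))^2 * (deriv d t)^4 * d t * (R)^4 + (1/8) * (Real.sin (d t))^2 * (Real.cos (d t))^2 * deriv (deriv d) t * (R)^4 + (-3/8) * (Real.sin (d t))^2 * (Real.cos (d t))^2 * (deriv d t)^2 * deriv (deriv d) t * (R)^4 + (-1/4) * (Real.sin (d t))^2 * (Real.cos (d t))^4 * deriv (deriv d) t * (R)^4 + (-1/4) * (Real.sin (d t))^2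 * (Real.cos (d t))^4 * (deriv d t)^2 * deriv (deriv d) t * (R)^4 + (-1/8) * (Real.sin (d t))^3 * Real.cos (d t) * (deriv d t)^2 * (R)^4 + (1/8) * (Real.sin (d t))^3 * Real.cos (d t) * (deriv d t)^4 * (R)^4 + (1/4) * (Real.sin (d t))^3 * (Real.cos (d t))^3 * (deriv d t)^2 * (R)^4 + (-1/4) * (Real.sin (d t))^3 * (Real.cos (d t))^3 * (deriv d t)^4 * (R)^4) * Real.sin_sq_add_cos_sq (d t)
  -- continuity facts
  have hUc : Continuous U := by
    have hUe : U = fun t =>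
        -((fun ψ => R * Real.sin (d ψ)) t * (deriv (fun ψ => R * Real.sin (d ψ)) t) ^ 2
            * ((fun ψ => R * Real.sin (d ψ)) t + deriv (deriv (fun ψ => R * Real.sin (d ψ))) t))
            * (d t / 2 - Real.sin (2 * d t) / 4)
          + (deriv (deriv (fun ψ => R * Real.sin (d ψ))) t * ((fun ψ => R * Real.sin (d ψ)) t) ^ 2
              + 3 * (fun ψ => R * Real.sin (d ψ)) t * (deriv (fun ψ => R * Real.sin (d ψ)) t) ^ 2)
            * ((fun ψ => R * Real.sin (d ψ)) t + deriv (deriv (fun ψ => R * Real.sin (d ψ))) t)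
            * (d t / 8 - Real.sin (4 * d t) / 32) := funext hU
    rw [hUe]
    simp only [hDh, hDDh']
    fun_prop
  have hU2c : Continuous fun t => U (t + Real.pi / 2) :=
    hUc.comp (continuous_id.add continuous_const)
  have hVc : Continuous fun t : ℝ => (-(Real.cos (2 * d t) * (2 * deriv d t)) * (2 * deriv d t) + -Real.sin (2 * d t) * (2 * deriv (deriv d) t)) ^ 2 - 4 * (-Real.sin (2 * d t) * (2 * deriv d t)) ^ 2 := by fun_prop
  have hPhiDc : Continuous PhiD := by
    rw [hPhiD]; fun_prop
  -- periodicity of U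
  have hPer : Function.Periodic U Real.pi := by
    intro t
    rw [hU (t + Real.pi), hU t]
    simp only [hDh, hDDh']
    rw [hd_per, hp_per, hq_per]
  -- FTC for Φ
  have hftc : (∫ t in (0:ℝ)..Real.pi, PhiD t) = 0 := by
    have hInt : IntervalIntegrable PhiD MeasureTheory.volume 0 Real.pi :=
      hPhiDc.intervalIntegrable _ _
    have := intervalIntegral.integral_eq_sub_of_hasDerivAt
      (f := fun u => R ^ 4 *
      ((Real.cos (d u) ^ 2 / 8 - 3 * Real.cos (d u) ^ 4 / 8 + Real.cos (d u) ^ 6 / 4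
          + Real.sin (d u) * Real.cos (d u) * d u / 8
          - Real.pi / 16 * (Real.sin (d u) * Real.cos (d u) ^ 3)) * deriv d u
        + (-(Real.cos (d u) ^ 2 / 8) + 3 * Real.cos (d u) ^ 4 / 8 - Real.cos (d u) ^ 6 / 4
          + Real.pi / 16 * (Real.sin (d u) * Real.cos (d u))
          - Real.sin (d u) * Real.cos (d u) * d u / 8
          - Real.pi / 16 * (Real.sin (d u) * Real.cos (d u) ^ 3)) * (deriv d u) ^ 3)) (f' := PhiD) (a := (0:ℝ)) (b := Real.pi)
      (fun t _ => HPhi t) hInt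
    rw [this]
    have h1 : d Real.pi = d 0 := by simpa using hd_per 0
    have h2 : deriv d Real.pi = deriv d 0 := by simpa using hp_per 0
    simp only [h1, h2]
    ring
  -- shift invariance
  have shift : (∫ t in (0:ℝ)..Real.pi, U (t + Real.pi / 2)) = ∫ t in (0:ℝ)..Real.pi, U t := by
    rw [intervalIntegral.integral_comp_add_right (fun t => U t) (Real.pi / 2)]
    rw [show (0:ℝ) + Real.pi / 2 = Real.pi / 2 by ring,
      show Real.pi + Real.pi / 2 = Real.pi / 2 + Real.pi by ring]
    simpa using hPer.intervalIntegral_add_eq (Real.pi / 2) 0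
  -- put everything together
  have two : (∫ t in (0:ℝ)..Real.pi, U t) + (∫ t in (0:ℝ)..Real.pi, U t)
      = Real.pi * R ^ 4 / 256 * ∫ t in (0:ℝ)..Real.pi, ((-(Real.cos (2 * d t) * (2 * deriv d t)) * (2 * deriv d t) + -Real.sin (2 * d t) * (2 * deriv (deriv d) t)) ^ 2 - 4 * (-Real.sin (2 * d t) * (2 * deriv d t)) ^ 2) := by
    calc (∫ t in (0:ℝ)..Real.pi, U t) + (∫ t in (0:ℝ)..Real.pi, U t)
        = (∫ t in (0:ℝ)..Real.pi, U t) + ∫ t in (0:ℝ)..Real.pi, U (t + Real.pi / 2) := by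
          rw [shift]
      _ = ∫ t in (0:ℝ)..Real.pi, (U t + U (t + Real.pi / 2)) :=
          (intervalIntegral.integral_add (hUc.intervalIntegrable _ _)
            (hU2c.intervalIntegrable _ _)).symm
      _ = ∫ t in (0:ℝ)..Real.pi,
            (Real.pi * R ^ 4 / 256 * ((-(Real.cos (2 * d t) * (2 * deriv d t)) * (2 * deriv d t) + -Real.sin (2 * d t) * (2 * deriv (deriv d) t)) ^ 2 - 4 * (-Real.sin (2 * d t) * (2 * deriv d t)) ^ 2) + PhiD t) := by
          apply intervalIntegral.integral_congr
          intro t _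
          exact key t
      _ = (∫ t in (0:ℝ)..Real.pi,
            Real.pi * R ^ 4 / 256 * ((-(Real.cos (2 * d t) * (2 * deriv d t)) * (2 * deriv d t) + -Real.sin (2 * d t) * (2 * deriv (deriv d) t)) ^ 2 - 4 * (-Real.sin (2 * d t) * (2 * deriv d t)) ^ 2))
          + ∫ t in (0:ℝ)..Real.pi, PhiD t :=
          intervalIntegral.integral_add ((continuous_const.mul hVc).intervalIntegrable _ _)
            (hPhiDc.intervalIntegrable _ _)
      _ = Real.pi * R ^ 4 / 256 * ∫ t in (0:ℝ)..Real.pi, ((-(Real.cos (2 * d t) * (2 * deriv d t)) * (2 * deriv d t) + -Real.sin (2 * d t) * (2 * deriv (deriv d) t)) ^ 2 - 4 * (-Real.sin (2 * d t) * (2 * deriv d t)) ^ 2) := by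
          rw [hftc, intervalIntegral.integral_const_mul]
          ring
  linear_combination two / 2
end

section
/- Let R > 0 and let d : ℝ → ℝ be a C² function satisfying d(ψ + π/2) = π/2 − d(ψ) for all ψ. Set h = R·(sin ∘ d), and define U(ψ) = −h(ψ)·h′(ψ)²·(h(ψ) + h″(ψ))·(d(ψ)/2 − sin(2·d(ψ))/4) + (h″(ψ)·h(ψ)² + 3·h(ψ)·h′(ψ)²)·(h(ψ) + h″(ψ))·(d(ψ)/8 − sin(4·d(ψ))/32), and W(ψ) = −(π·R⁴/32)·sin²(2·d(ψ))·d′(ψ)² + (π·R⁴/192)·(3 − cos(4·d(ψ)))·d′(ψ)⁴ + (π·R⁴/128)·sin²(2·d(ψ))·d″(ψ)². Then ∫₀^π U(ψ) dψ = ∫₀^π W(ψ) dψ. -/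
open Real

private lemma ms2 (x : ℝ) : Real.sin (2 * x) = 2 * Real.sin x * Real.cos x := Real.sin_two_mul x

private lemma mc2 (x : ℝ) : Real.cos (2 * x) = Real.cos x ^ 2 - Real.sin x ^ 2 := Real.cos_two_mul' x

private lemma ms4 (x : ℝ) : Real.sin (4 * x) =
    4 * Real.sin x * Real.cos x ^ 3 - 4 * Real.sin x ^ 3 * Real.cos x := by
  rw [show (4 : ℝ) * x = 2 * (2 * x) by ring, ms2 (2 * x), ms2 x, mc2 x]; ring

private lemma mc4 (x : ℝ) : Real.cos (4 * x) =
    Real.cos x ^ 4 - 6 * Real.sin x ^ 2 * Real.cos x ^ 2 + Real.sin x ^ 4 := by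
  rw [show (4 : ℝ) * x = 2 * (2 * x) by ring, mc2 (2 * x), ms2 x, mc2 x]; ring

private lemma ms6 (x : ℝ) : Real.sin (6 * x) =
    6 * Real.sin x * Real.cos x ^ 5 - 20 * Real.sin x ^ 3 * Real.cos x ^ 3
      + 6 * Real.sin x ^ 5 * Real.cos x := by
  rw [show (6 : ℝ) * x = 2 * x + 4 * x by ring, Real.sin_add, ms2 x, mc2 x, ms4 x, mc4 x]; ring

private lemma mc6 (x : ℝ) : Real.cos (6 * x) =
    Real.cos x ^ 6 - 15 * Real.sin x ^ 2 * Real.cos x ^ 4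
      + 15 * Real.sin x ^ 4 * Real.cos x ^ 2 - Real.sin x ^ 6 := by
  rw [show (6 : ℝ) * x = 2 * x + 4 * x by ring, Real.cos_add, ms2 x, mc2 x, ms4 x, mc4 x]; ring

/-- The primitive used for integration by parts. -/
private noncomputable def GG (R : ℝ) (d : ℝ → ℝ) : ℝ → ℝ := fun x =>
  R ^ 4 * (deriv d x * ((-Real.cos (2 * d x) + Real.cos (6 * d x)) / 256 - Real.pi * Real.sin (2 * d x) / 128 - Real.pi * Real.sin (4 * d x) / 256 + d x * Real.sin (2 * d x) / 32)
    + (deriv d x) ^ 3 * ((Real.cos (2 * d x) - Real.cos (6 * d x)) / 256 + Real.pi * Real.sin (2 * d x) / 128 + Real.pi * Real.sin (4 * d x) / 768 - d x * Real.sin (2 * d x) / 32))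

/-- The derivative of `GG`. -/
private noncomputable def DGG (R : ℝ) (d : ℝ → ℝ) : ℝ → ℝ := fun x =>
  R ^ 4 * (deriv (deriv d) x * ((-Real.cos (2 * d x) + Real.cos (6 * d x)) / 256 - Real.pi * Real.sin (2 * d x) / 128 - Real.pi * Real.sin (4 * d x) / 256 + d x * Real.sin (2 * d x) / 32)
    + (deriv d x) ^ 2 * ((2 * Real.sin (2 * d x) - 6 * Real.sin (6 * d x)) / 256 - Real.pi * Real.cos (2 * d x) / 64 - Real.pi * Real.cos (4 * d x) / 64 + Real.sin (2 * d x) / 32 + d x * Real.cos (2 * d x) / 16)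
    + 3 * (deriv d x) ^ 2 * deriv (deriv d) x * ((Real.cos (2 * d x) - Real.cos (6 * d x)) / 256 + Real.pi * Real.sin (2 * d x) / 128 + Real.pi * Real.sin (4 * d x) / 768 - d x * Real.sin (2 * d x) / 32)
    + (deriv d x) ^ 4 * (-((2 * Real.sin (2 * d x) - 6 * Real.sin (6 * d x)) / 256) + Real.pi * Real.cos (2 * d x) / 64 + Real.pi * Real.cos (4 * d x) / 192 - Real.sin (2 * d x) / 32 - d x * Real.cos (2 * d x) / 16))

private lemma GG_hasDeriv (R : ℝ) (d : ℝ → ℝ)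
    (hd1 : ∀ x, HasDerivAt d (deriv d x) x)
    (hd2 : ∀ x, HasDerivAt (deriv d) (deriv (deriv d) x) x) (ψ : ℝ) :
    HasDerivAt (GG R d) (DGG R d ψ) ψ := by
  have h1 := hd1 ψ
  have h2 := hd2 ψ
  have hs2 := (h1.const_mul (2 : ℝ)).sin
  have hc2 := (h1.const_mul (2 : ℝ)).cos
  have hs4 := (h1.const_mul (4 : ℝ)).sin
  have hc6 := (h1.const_mul (6 : ℝ)).cos
  have hG1 := ((((hc2.neg.add hc6).div_const 256).sub ((hs2.const_mul Real.pi).div_const 128)).sub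
      ((hs4.const_mul Real.pi).div_const 256)).add ((h1.mul hs2).div_const 32)
  have hG3 := ((((hc2.sub hc6).div_const 256).add ((hs2.const_mul Real.pi).div_const 128)).add
      ((hs4.const_mul Real.pi).div_const 768)).sub ((h1.mul hs2).div_const 32)
  have htot := ((h2.mul hG1).add ((h2.pow 3).mul hG3)).const_mul (R ^ 4)
  have : HasDerivAt (GG R d) _ ψ := htot
  convert this using 1
  simp only [DGG, Pi.add_apply, Pi.sub_apply, Pi.neg_apply, Pi.mul_apply, Pi.pow_apply, Pi.div_apply]
  ring

/-- Symmetrization and integration by parts: `∫₀^π U = ∫₀^π W`, where `W` has no terms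
linear in `d''`. -/
theorem stmt_9 (R : ℝ) (hR : 0 < R) (d : ℝ → ℝ) (hd : ContDiff ℝ 2 d)
    (hdsym : ∀ ψ : ℝ, d (ψ + Real.pi / 2) = Real.pi / 2 - d ψ)
    (h : ℝ → ℝ) (hh : h = fun ψ => R * Real.sin (d ψ))
    (U : ℝ → ℝ)
    (hU : ∀ ψ : ℝ, U ψ =
      -(h ψ * (deriv h ψ) ^ 2 * (h ψ + deriv (deriv h) ψ))
          * (d ψ / 2 - Real.sin (2 * d ψ) / 4)
        + (deriv (deriv h) ψ * (h ψ) ^ 2 + 3 * h ψ * (deriv h ψ) ^ 2)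
          * (h ψ + deriv (deriv h) ψ)
          * (d ψ / 8 - Real.sin (4 * d ψ) / 32))
    (W : ℝ → ℝ)
    (hW : ∀ ψ : ℝ, W ψ =
      -(Real.pi * R ^ 4 / 32) * Real.sin (2 * d ψ) ^ 2 * (deriv d ψ) ^ 2
        + (Real.pi * R ^ 4 / 192) * (3 - Real.cos (4 * d ψ)) * (deriv d ψ) ^ 4
        + (Real.pi * R ^ 4 / 128) * Real.sin (2 * d ψ) ^ 2 * (deriv (deriv d) ψ) ^ 2) :
    ∫ ψ in (0:ℝ)..Real.pi, U ψ = ∫ ψ in (0:ℝ)..Real.pi, W ψ := by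
  -- differentiability facts
  have hdiff : Differentiable ℝ d := hd.differentiable (by norm_num)
  have hd1 : ∀ x, HasDerivAt d (deriv d x) x := fun x => (hdiff x).hasDerivAt
  have hcd1 : ContDiff ℝ 1 (deriv d) :=
    (contDiff_succ_iff_deriv.mp (show ContDiff ℝ (1 + 1) d by exact_mod_cast hd)).2.2
  have hdiff2 : Differentiable ℝ (deriv d) := hcd1.differentiable (by norm_num)
  have hd2 : ∀ x, HasDerivAt (deriv d) (deriv (deriv d) x) x := fun x => (hdiff2 x).hasDerivAt
  have hcd : Continuous d := hd.continuous
  have hcp : Continuous (deriv d) := hcd1.continuous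
  have hcq : Continuous (deriv (deriv d)) := hcd1.continuous_deriv le_rfl
  -- first and second derivative of h
  have hderivh : deriv h = fun x => R * (Real.cos (d x) * deriv d x) := by
    funext x
    rw [hh]
    exact (((hd1 x).sin).const_mul R).deriv
  have hderivh2 : ∀ x, deriv (deriv h) x
      = R * (Real.cos (d x) * deriv (deriv d) x - Real.sin (d x) * (deriv d x) ^ 2) := by
    intro x
    have : HasDerivAt (deriv h)
        (R * (Real.cos (d x) * deriv (deriv d) x - Real.sin (d x) * (deriv d x) ^ 2)) x := by
      rw [hderivh]
      have := (((hd1 x).cos).mul (hd2 x)).const_mul R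
      refine this.congr_deriv ?_
      ring
    exact this.deriv
  -- symmetry of derivatives
  have psym : ∀ x, deriv d (x + Real.pi / 2) = -deriv d x := by
    intro x
    have hA : HasDerivAt (fun y => d (y + Real.pi / 2)) (deriv d (x + Real.pi / 2) * 1) x :=
      (hd1 (x + Real.pi / 2)).comp x ((hasDerivAt_id x).add_const (Real.pi / 2))
    have hB : HasDerivAt (fun y => d (y + Real.pi / 2)) (-deriv d x) x := by
      have hfe : (fun y => d (y + Real.pi / 2)) = fun y => Real.pi / 2 - d y :=
        funext fun y => hdsym y
      rw [hfe]
      exact (hd1 x).const_sub (Real.pi / 2)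
    have := hA.unique hB
    linarith [this]
  have qsym : ∀ x, deriv (deriv d) (x + Real.pi / 2) = -deriv (deriv d) x := by
    intro x
    have hA : HasDerivAt (fun y => deriv d (y + Real.pi / 2))
        (deriv (deriv d) (x + Real.pi / 2) * 1) x :=
      by have := (hd2 (x + Real.pi / 2)).comp x ((hasDerivAt_id x).add_const (Real.pi / 2)); exact this
    have hB : HasDerivAt (fun y => deriv d (y + Real.pi / 2)) (-deriv (deriv d) x) x := by
      have hfe : (fun y => deriv d (y + Real.pi / 2)) = fun y => -deriv d y :=
        funext fun y => psym y
      rw [hfe]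
      exact (hd2 x).neg
    have := hA.unique hB
    linarith [this]
  -- periodicity
  have dper : ∀ x, d (x + Real.pi) = d x := by
    intro x
    have e1 := hdsym (x + Real.pi / 2)
    have e2 := hdsym x
    rw [show x + Real.pi / 2 + Real.pi / 2 = x + Real.pi by ring] at e1
    linarith
  have pper : ∀ x, deriv d (x + Real.pi) = deriv d x := by
    intro x
    have e1 := psym (x + Real.pi / 2)
    rw [show x + Real.pi / 2 + Real.pi / 2 = x + Real.pi by ring] at e1
    rw [e1, psym x, neg_neg]
  have qper : ∀ x, deriv (deriv d) (x + Real.pi) = deriv (deriv d) x := by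
    intro x
    have e1 := qsym (x + Real.pi / 2)
    rw [show x + Real.pi / 2 + Real.pi / 2 = x + Real.pi by ring] at e1
    rw [e1, qsym x, neg_neg]
  -- value of U in terms of d and its derivatives
  have hUval : ∀ x, U x =
      -(R * Real.sin (d x) * (R * (Real.cos (d x) * deriv d x)) ^ 2
          * (R * Real.sin (d x)
            + R * (Real.cos (d x) * deriv (deriv d) x - Real.sin (d x) * (deriv d x) ^ 2)))
          * (d x / 2 - Real.sin (2 * d x) / 4)
        + (R * (Real.cos (d x) * deriv (deriv d) x - Real.sin (d x) * (deriv d x) ^ 2)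
              * (R * Real.sin (d x)) ^ 2
            + 3 * (R * Real.sin (d x)) * (R * (Real.cos (d x) * deriv d x)) ^ 2)
          * (R * Real.sin (d x)
            + R * (Real.cos (d x) * deriv (deriv d) x - Real.sin (d x) * (deriv d x) ^ 2))
          * (d x / 8 - Real.sin (4 * d x) / 32) := by
    intro x
    rw [hU x, hderivh2 x, hderivh]
    simp only [hh]
  have Uper : ∀ x, U (x + Real.pi) = U x := by
    intro x
    rw [hUval (x + Real.pi), hUval x, dper x, pper x, qper x]
  -- the key pointwise identity
  have key : ∀ ψ, U ψ + U (ψ + Real.pi / 2) = 2 * W ψ + 2 * DGG R d ψ := by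
    intro ψ
    have e1 : d (ψ + Real.pi / 2) = Real.pi / 2 - d ψ := hdsym ψ
    have e2 : deriv d (ψ + Real.pi / 2) = -deriv d ψ := psym ψ
    have e3 : deriv (deriv d) (ψ + Real.pi / 2) = -deriv (deriv d) ψ := qsym ψ
    rw [hUval ψ, hUval (ψ + Real.pi / 2), hW ψ, e1, e2, e3,
      Real.sin_pi_div_two_sub, Real.cos_pi_div_two_sub,
      show (2 : ℝ) * (Real.pi / 2 - d ψ) = Real.pi - 2 * d ψ by ring, Real.sin_pi_sub,
      show (4 : ℝ) * (Real.pi / 2 - d ψ) = 2 * Real.pi - 4 * d ψ by ring, Real.sin_two_pi_sub]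
    simp only [DGG, ms2, mc2, ms4, mc4, ms6, mc6]
    linear_combination ((1/32 : ℝ) * (deriv d ψ)^4 * (Real.pi) * (R)^4 - (1/128 : ℝ) * (Real.cos (d ψ))^2 * (deriv (deriv d) ψ) * (R)^4 - (1/32 : ℝ) * (Real.cos (d ψ))^2 * (deriv d ψ)^2 * (Real.pi) * (R)^4 + (3/128 : ℝ) * (Real.cos (d ψ))^2 * (deriv d ψ)^2 * (deriv (deriv d) ψ) * (R)^4 + (1/16 : ℝ) * (Real.cos (d ψ))^2 * (deriv d ψ)^4 * (Real.pi) * (R)^4 + (1/8 : ℝ) * (Real.cos (d ψ))^2 * ((d ψ)) * (deriv d ψ)^2 * (R)^4 - (1/8 : ℝ) * (Real.cos (d ψ))^2 * ((d ψ)) * (deriv d ψ)^4 * (R)^4 - (1/128 : ℝ) * (Real.cos (d ψ))^4 * (deriv (deriv d) ψ) * (R)^4 + (3/128 : ℝ) * (Real.cos (d ψ))^4 * (deriv d ψ)^2 * (deriv (deriv d) ψ) * (R)^4 - (1/32 : ℝ) * (Real.sin (d ψ)) * (Real.cos (d ψ)) * (deriv (deriv d) ψ) * (Real.pi) * (R)^4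 + (5/32 : ℝ) * (Real.sin (d ψ)) * (Real.cos (d ψ)) * (deriv d ψ)^2 * (R)^4 + (3/32 : ℝ) * (Real.sin (d ψ)) * (Real.cos (d ψ)) * (deriv d ψ)^2 * (deriv (deriv d) ψ) * (Real.pi) * (R)^4 - (5/32 : ℝ) * (Real.sin (d ψ)) * (Real.cos (d ψ)) * (deriv d ψ)^4 * (R)^4 + (1/8 : ℝ) * (Real.sin (d ψ)) * (Real.cos (d ψ)) * ((d ψ)) * (deriv (deriv d) ψ) * (R)^4 - (3/8 : ℝ) * (Real.sin (d ψ)) * (Real.cos (d ψ)) * ((d ψ)) * (deriv d ψ)^2 * (deriv (deriv d) ψ) * (R)^4 + (5/32 : ℝ) * (Real.sin (d ψ)) * (Real.cos (d ψ))^3 * (deriv d ψ)^2 * (R)^4 - (5/32 : ℝ) * (Real.sin (d ψ)) * (Real.cos (d ψ))^3 * (deriv d ψ)^4 * (R)^4 - (1/8 : ℝ) * (Real.sin (d ψ)) * (Real.cos (d ψ))^5 * (deriv d ψ)^2 * (R)^4 + (1/8 : ℝ) * (Real.sin (d ψ)) * (Real.cos (d ψ))^5 * (deriv d ψ)^4 *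 (R)^4 + (1/128 : ℝ) * (Real.sin (d ψ))^2 * (deriv (deriv d) ψ) * (R)^4 + (1/32 : ℝ) * (Real.sin (d ψ))^2 * (deriv d ψ)^2 * (Real.pi) * (R)^4 - (3/128 : ℝ) * (Real.sin (d ψ))^2 * (deriv d ψ)^2 * (deriv (deriv d) ψ) * (R)^4 - (1/8 : ℝ) * (Real.sin (d ψ))^2 * ((d ψ)) * (deriv d ψ)^2 * (R)^4 + (1/8 : ℝ) * (Real.sin (d ψ))^2 * ((d ψ)) * (deriv d ψ)^4 * (R)^4 - (1/8 : ℝ) * (Real.sin (d ψ))^2 * (Real.cos (d ψ))^4 * (deriv (deriv d) ψ) * (R)^4 - (1/8 : ℝ) * (Real.sin (d ψ))^2 * (Real.cos (d ψ))^4 * (deriv d ψ)^2 * (deriv (deriv d) ψ) * (R)^4 + (5/32 : ℝ) * (Real.sin (d ψ))^3 * (Real.cos (d ψ)) * (deriv d ψ)^2 * (R)^4 - (5/32 : ℝ) * (Real.sin (d ψ))^3 * (Real.cos (d ψ)) * (deriv d ψ)^4 * (R)^4 + (1/4 : ℝ) * (Real.sin (d ψ))^3 * (Real.cos (d ψ))^3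 * (deriv d ψ)^2 * (R)^4 - (1/4 : ℝ) * (Real.sin (d ψ))^3 * (Real.cos (d ψ))^3 * (deriv d ψ)^4 * (R)^4 + (1/128 : ℝ) * (Real.sin (d ψ))^4 * (deriv (deriv d) ψ) * (R)^4 - (3/128 : ℝ) * (Real.sin (d ψ))^4 * (deriv d ψ)^2 * (deriv (deriv d) ψ) * (R)^4 + (1/8 : ℝ) * (Real.sin (d ψ))^4 * (Real.cos (d ψ))^2 * (deriv (deriv d) ψ) * (R)^4 + (1/8 : ℝ) * (Real.sin (d ψ))^4 * (Real.cos (d ψ))^2 * (deriv d ψ)^2 * (deriv (deriv d) ψ) * (R)^4 - (1/8 : ℝ) * (Real.sin (d ψ))^5 * (Real.cos (d ψ)) * (deriv d ψ)^2 * (R)^4 + (1/8 : ℝ) * (Real.sin (d ψ))^5 * (Real.cos (d ψ)) * (deriv d ψ)^4 * (R)^4) * Real.sin_sq_add_cos_sq (d ψ)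
  -- continuity and integrability
  have hcU : Continuous U := by
    rw [show U = _ from funext hUval]
    fun_prop
  have hcW : Continuous W := by
    rw [show W = _ from funext hW]
    fun_prop
  have hcDG : Continuous (DGG R d) := by
    unfold DGG
    fun_prop
  have hIU : IntervalIntegrable U MeasureTheory.volume 0 Real.pi := hcU.intervalIntegrable _ _
  have hIUs : IntervalIntegrable (fun ψ => U (ψ + Real.pi / 2)) MeasureTheory.volume 0 Real.pi :=
    (hcU.comp (by fun_prop)).intervalIntegrable _ _
  -- shift invariance of the integral of U
  have I1 : ∫ ψ in (0:ℝ)..Real.pi, U (ψ + Real.pi / 2) = ∫ ψ in (0:ℝ)..Real.pi, U ψ := by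
    rw [intervalIntegral.integral_comp_add_right U (Real.pi / 2)]
    have hper : Function.Periodic U Real.pi := Uper
    have e := hper.intervalIntegral_add_eq (Real.pi / 2) 0
    rw [show (0:ℝ) + Real.pi / 2 = Real.pi / 2 by ring,
      show Real.pi + Real.pi / 2 = Real.pi / 2 + Real.pi by ring, e, zero_add]
  have I2 : ∫ ψ in (0:ℝ)..Real.pi, (U ψ + U (ψ + Real.pi / 2))
      = 2 * ∫ ψ in (0:ℝ)..Real.pi, U ψ := by
    rw [intervalIntegral.integral_add hIU hIUs, I1]
    ring
  have I3 : ∫ ψ in (0:ℝ)..Real.pi, (U ψ + U (ψ + Real.pi / 2))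
      = ∫ ψ in (0:ℝ)..Real.pi, (2 * W ψ + 2 * DGG R d ψ) :=
    intervalIntegral.integral_congr fun x _ => key x
  have I4 : ∫ ψ in (0:ℝ)..Real.pi, (2 * W ψ + 2 * DGG R d ψ)
      = 2 * (∫ ψ in (0:ℝ)..Real.pi, W ψ) + 2 * ∫ ψ in (0:ℝ)..Real.pi, DGG R d ψ := by
    rw [intervalIntegral.integral_add ((show Continuous fun ψ => 2 * W ψ from continuous_const.mul hcW).intervalIntegrable _ _)
      ((show Continuous fun ψ => 2 * DGG R d ψ from continuous_const.mul hcDG).intervalIntegrable _ _),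
      intervalIntegral.integral_const_mul, intervalIntegral.integral_const_mul]
  have I5 : ∫ ψ in (0:ℝ)..Real.pi, DGG R d ψ = GG R d Real.pi - GG R d 0 :=
    intervalIntegral.integral_eq_sub_of_hasDerivAt
      (fun x _ => GG_hasDeriv R d hd1 hd2 x) (hcDG.intervalIntegrable _ _)
  have I6 : GG R d Real.pi = GG R d 0 := by
    have a1 : d Real.pi = d 0 := by have := dper 0; rwa [zero_add] at this
    have a2 : deriv d Real.pi = deriv d 0 := by have := pper 0; rwa [zero_add] at this
    simp only [GG, a1, a2]
  rw [I5, I6] at I4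
  linarith [I2.symm.trans (I3.trans I4)]
end

section
/- Let R > 0 and let d : ℝ → ℝ be a C² function satisfying d(ψ + π/2) = π/2 − d(ψ) for all ψ. Set μ(ψ) = cos(2·d(ψ)) and define W(ψ) = −(π·R⁴/32)·sin²(2·d(ψ))·d′(ψ)² + (π·R⁴/192)·(3 − cos(4·d(ψ)))·d′(ψ)⁴ + (π·R⁴/128)·sin²(2·d(ψ))·d″(ψ)². Then ∫₀^π W(ψ) dψ = (π·R⁴/512)·∫₀^π (μ″(ψ)² − 4·μ′(ψ)²) dψ. -/
open Real

/-- Change of function `μ = cos (2 d)` and one more integration by parts: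
`∫₀^π W = (π R⁴ / 512) ∫₀^π (μ''² − 4 μ'²)`. -/
theorem stmt_10 (R : ℝ) (hR : 0 < R) (d : ℝ → ℝ) (hd : ContDiff ℝ 2 d)
    (hdsym : ∀ ψ : ℝ, d (ψ + Real.pi / 2) = Real.pi / 2 - d ψ)
    (μ : ℝ → ℝ) (hμ : μ = fun ψ => Real.cos (2 * d ψ))
    (W : ℝ → ℝ)
    (hW : ∀ ψ : ℝ, W ψ =
      -(Real.pi * R ^ 4 / 32) * Real.sin (2 * d ψ) ^ 2 * (deriv d ψ) ^ 2
        + (Real.pi * R ^ 4 / 192) * (3 - Real.cos (4 * d ψ)) * (deriv d ψ) ^ 4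
        + (Real.pi * R ^ 4 / 128) * Real.sin (2 * d ψ) ^ 2 * (deriv (deriv d) ψ) ^ 2) :
    ∫ ψ in (0:ℝ)..Real.pi, W ψ
      = (Real.pi * R ^ 4 / 512)
        * ∫ ψ in (0:ℝ)..Real.pi, ((deriv (deriv μ) ψ) ^ 2 - 4 * (deriv μ ψ) ^ 2) := by
  have hd2 : ContDiff ℝ (1 + 1 : ℕ) d := by exact_mod_cast hd
  have hdd : Differentiable ℝ d := hd2.differentiable (by norm_num)
  have hd1c : ContDiff ℝ 1 (deriv d) := (contDiff_succ_iff_deriv.mp (show ContDiff ℝ (1+1 : ℕ∞) d by exact_mod_cast hd)).2.2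
  have hd1d : Differentiable ℝ (deriv d) := hd1c.differentiable (by norm_num)
  have hd1cont : Continuous (deriv d) := hd1d.continuous
  have hd2cont : Continuous (deriv (deriv d)) := hd1c.continuous_deriv le_rfl
  have hdc : Continuous d := hdd.continuous
  -- first derivative of μ
  have hμ1 : ∀ ψ : ℝ, HasDerivAt μ (-2 * Real.sin (2 * d ψ) * deriv d ψ) ψ := by
    intro ψ
    have h1 : HasDerivAt (fun x => 2 * d x) (2 * deriv d ψ) ψ :=
      ((hdd ψ).hasDerivAt).const_mul 2
    have h2 := (Real.hasDerivAt_cos (2 * d ψ)).comp ψ h1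
    rw [hμ]
    refine h2.congr_deriv ?_
    ring
  have hμ1' : deriv μ = fun ψ => -2 * Real.sin (2 * d ψ) * deriv d ψ :=
    funext fun ψ => (hμ1 ψ).deriv
  -- second derivative of μ
  have hμ2 : ∀ ψ : ℝ, HasDerivAt (deriv μ)
      (-4 * Real.cos (2 * d ψ) * (deriv d ψ) ^ 2
        - 2 * Real.sin (2 * d ψ) * deriv (deriv d) ψ) ψ := by
    intro ψ
    rw [hμ1']
    have hs : HasDerivAt (fun x => Real.sin (2 * d x))
        (Real.cos (2 * d ψ) * (2 * deriv d ψ)) ψ :=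
      by have := (Real.hasDerivAt_sin (2 * d ψ)).comp ψ (((hdd ψ).hasDerivAt).const_mul 2); exact this
    have hq : HasDerivAt (deriv d) (deriv (deriv d) ψ) ψ := (hd1d ψ).hasDerivAt
    have h := (hs.const_mul (-2)).mul hq
    refine h.congr_deriv ?_
    ring
  have hμ2' : deriv (deriv μ) = fun ψ =>
      -4 * Real.cos (2 * d ψ) * (deriv d ψ) ^ 2
        - 2 * Real.sin (2 * d ψ) * deriv (deriv d) ψ :=
    funext fun ψ => (hμ2 ψ).deriv
  -- the antiderivative F of the difference of integrands
  set c : ℝ := Real.pi * R ^ 4 / 192 with hc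
  set F : ℝ → ℝ := fun ψ => c * Real.sin (4 * d ψ) * (deriv d ψ) ^ 3 with hFdef
  have hF : ∀ ψ : ℝ, HasDerivAt F
      (c * (Real.cos (4 * d ψ) * (4 * deriv d ψ)) * (deriv d ψ) ^ 3
        + c * Real.sin (4 * d ψ) * (3 * (deriv d ψ) ^ 2 * deriv (deriv d) ψ)) ψ := by
    intro ψ
    have hs : HasDerivAt (fun x => Real.sin (4 * d x))
        (Real.cos (4 * d ψ) * (4 * deriv d ψ)) ψ :=
      by have := (Real.hasDerivAt_sin (4 * d ψ)).comp ψ (((hdd ψ).hasDerivAt).const_mul 4); exact this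
    have hp : HasDerivAt (fun x => (deriv d x) ^ 3)
        (3 * (deriv d ψ) ^ 2 * deriv (deriv d) ψ) ψ := by
      have h := ((hd1d ψ).hasDerivAt).pow 3
      refine h.congr_deriv ?_
      all_goals push_cast; ring
    have h := (hs.const_mul c).mul hp
    refine h.congr_deriv ?_
    all_goals ring
  -- pointwise identity
  have key : ∀ ψ : ℝ,
      (Real.pi * R ^ 4 / 512) * ((deriv (deriv μ) ψ) ^ 2 - 4 * (deriv μ ψ) ^ 2) - W ψ
        = c * (Real.cos (4 * d ψ) * (4 * deriv d ψ)) * (deriv d ψ) ^ 3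
          + c * Real.sin (4 * d ψ) * (3 * (deriv d ψ) ^ 2 * deriv (deriv d) ψ) := by
    intro ψ
    have hcos4 : Real.cos (4 * d ψ) = 2 * Real.cos (2 * d ψ) ^ 2 - 1 := by
      rw [show (4 : ℝ) * d ψ = 2 * (2 * d ψ) by ring, Real.cos_two_mul]
    have hsin4 : Real.sin (4 * d ψ) = 2 * Real.sin (2 * d ψ) * Real.cos (2 * d ψ) := by
      rw [show (4 : ℝ) * d ψ = 2 * (2 * d ψ) by ring, Real.sin_two_mul]
    rw [hW ψ, (hμ2 ψ).deriv, (hμ1 ψ).deriv, hcos4, hsin4, hc]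
    ring
  have hFderiv : ∀ ψ : ℝ, HasDerivAt F
      ((Real.pi * R ^ 4 / 512) * ((deriv (deriv μ) ψ) ^ 2 - 4 * (deriv μ ψ) ^ 2) - W ψ) ψ := by
    intro ψ; rw [key ψ]; exact hF ψ
  -- continuity / integrability
  have hWc : Continuous W := by
    have hWe : W = fun ψ =>
        -(Real.pi * R ^ 4 / 32) * Real.sin (2 * d ψ) ^ 2 * (deriv d ψ) ^ 2
          + (Real.pi * R ^ 4 / 192) * (3 - Real.cos (4 * d ψ)) * (deriv d ψ) ^ 4
          + (Real.pi * R ^ 4 / 128) * Real.sin (2 * d ψ) ^ 2 * (deriv (deriv d) ψ) ^ 2 :=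
      funext hW
    rw [hWe]
    fun_prop
  have hIc : Continuous (fun ψ => (deriv (deriv μ) ψ) ^ 2 - 4 * (deriv μ ψ) ^ 2) := by
    have he : (fun ψ => (deriv (deriv μ) ψ) ^ 2 - 4 * (deriv μ ψ) ^ 2) = fun ψ =>
        (-4 * Real.cos (2 * d ψ) * (deriv d ψ) ^ 2
          - 2 * Real.sin (2 * d ψ) * deriv (deriv d) ψ) ^ 2
          - 4 * (-2 * Real.sin (2 * d ψ) * deriv d ψ) ^ 2 := by
      funext ψ; rw [(hμ2 ψ).deriv, (hμ1 ψ).deriv]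
    rw [he]
    fun_prop
  have hWint : IntervalIntegrable W MeasureTheory.volume 0 Real.pi :=
    hWc.intervalIntegrable _ _
  have hIint : IntervalIntegrable (fun ψ => (deriv (deriv μ) ψ) ^ 2 - 4 * (deriv μ ψ) ^ 2)
      MeasureTheory.volume 0 Real.pi := hIc.intervalIntegrable _ _
  -- FTC
  have hint : (∫ ψ in (0:ℝ)..Real.pi,
      ((Real.pi * R ^ 4 / 512) * ((deriv (deriv μ) ψ) ^ 2 - 4 * (deriv μ ψ) ^ 2) - W ψ))
        = F Real.pi - F 0 := by
    apply intervalIntegral.integral_eq_sub_of_hasDerivAt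
    · intro x _; exact hFderiv x
    · exact ((continuous_const.mul hIc).sub hWc).intervalIntegrable _ _
  -- periodicity gives vanishing boundary term
  have hper : ∀ ψ : ℝ, d (ψ + Real.pi) = d ψ := by
    intro ψ
    have h1 := hdsym (ψ + Real.pi / 2)
    have h2 := hdsym ψ
    rw [show ψ + Real.pi / 2 + Real.pi / 2 = ψ + Real.pi by ring] at h1
    rw [h1, h2]; ring
  have hper1 : ∀ ψ : ℝ, deriv d (ψ + Real.pi) = deriv d ψ := by
    intro ψ
    have h := deriv_comp_add_const d Real.pi ψ
    rw [show (fun y => d (y + Real.pi)) = d from funext hper] at h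
    rw [← h]
  have hF0 : F Real.pi = F 0 := by
    have h1 : d Real.pi = d 0 := by simpa using hper 0
    have h2 : deriv d Real.pi = deriv d 0 := by simpa using hper1 0
    simp only [hFdef, h1, h2]
  have hsplit : (∫ ψ in (0:ℝ)..Real.pi,
      ((Real.pi * R ^ 4 / 512) * ((deriv (deriv μ) ψ) ^ 2 - 4 * (deriv μ ψ) ^ 2) - W ψ))
      = (Real.pi * R ^ 4 / 512)
          * (∫ ψ in (0:ℝ)..Real.pi, ((deriv (deriv μ) ψ) ^ 2 - 4 * (deriv μ ψ) ^ 2))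
        - ∫ ψ in (0:ℝ)..Real.pi, W ψ := by
    rw [intervalIntegral.integral_sub ((hIint.const_mul _)) hWint,
      intervalIntegral.integral_const_mul]
  rw [hsplit, hF0] at hint
  linarith
end

section
/- Let μ : ℝ → ℝ be a C² function with μ(ψ + π) = μ(ψ) for all ψ, and suppose ∫₀^π (μ″(ψ)² − 4·μ′(ψ)²) dψ ≤ 0. Then there exist real constants a, b, c such that μ(ψ) = a·cos(2ψ) + b·sin(2ψ) + c for all ψ. -/
open Real MeasureTheory Set AddCircle

local instance : Fact ((0:ℝ) < Real.pi) := ⟨Real.pi_pos⟩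

lemma coe_toIcoMod_pi (x : ℝ) : (↑(toIcoMod Real.pi_pos 0 x) : AddCircle Real.pi) = ↑x := by
  have h1 : toIcoMod Real.pi_pos 0 x = x - toIcoDiv Real.pi_pos 0 x • Real.pi := rfl
  have h : ((toIcoDiv Real.pi_pos 0 x • Real.pi : ℝ) : AddCircle Real.pi) = 0 := by
    rw [zsmul_eq_mul, AddCircle.coe_eq_zero_iff]
    exact ⟨toIcoDiv Real.pi_pos 0 x, by rw [zsmul_eq_mul]⟩
  calc (↑(toIcoMod Real.pi_pos 0 x) : AddCircle Real.pi)
      = ↑(x - toIcoDiv Real.pi_pos 0 x • Real.pi) := by rw [h1]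
    _ = (↑x : AddCircle Real.pi) - ↑(toIcoDiv Real.pi_pos 0 x • Real.pi : ℝ) :=
        QuotientAddGroup.mk_sub _ _ _
    _ = ↑x := by rw [h, sub_zero]

lemma liftIco_periodic_apply {f : ℝ → ℂ} (hf : Function.Periodic f Real.pi) (x : ℝ) :
    AddCircle.liftIco Real.pi 0 f ↑x = f x := by
  have h1 := toIcoMod_mem_Ico' Real.pi_pos x
  have h2 : AddCircle.liftIco Real.pi 0 f ↑(toIcoMod Real.pi_pos 0 x) = f (toIcoMod Real.pi_pos 0 x) :=
    AddCircle.liftIco_coe_apply (by simpa using h1)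
  rw [coe_toIcoMod_pi] at h2
  rw [h2]
  have h3 : toIcoMod Real.pi_pos 0 x = x - toIcoDiv Real.pi_pos 0 x • Real.pi := rfl
  rw [h3, hf.sub_zsmul_eq]

noncomputable def periodicLift {f : ℝ → ℂ} (hf : Continuous f) (hper : Function.Periodic f Real.pi) :
    C(AddCircle Real.pi, ℂ) :=
  ⟨AddCircle.liftIco Real.pi 0 f,
   AddCircle.liftIco_zero_continuous (by simpa using (hper 0).symm) hf.continuousOn⟩

lemma periodicLift_coe {f : ℝ → ℂ} (hf : Continuous f) (hper : Function.Periodic f Real.pi) (x : ℝ) :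
    periodicLift hf hper ↑x = f x := liftIco_periodic_apply hper x

lemma fourierCoeff_periodicLift {f : ℝ → ℂ} (hf : Continuous f) (hper : Function.Periodic f Real.pi)
    (n : ℤ) : fourierCoeff (⇑(periodicLift hf hper)) n = fourierCoeffOn Real.pi_pos f n := by
  have h : ⇑(periodicLift hf hper) = AddCircle.liftIco Real.pi 0 f := rfl
  rw [h, fourierCoeff_liftIco_eq f n]
  congr 1
  exact zero_add Real.pi

lemma parseval_aux {f : ℝ → ℂ} (hf : Continuous f) (hper : Function.Periodic f Real.pi) :
    Summable (fun n : ℤ => ‖fourierCoeffOn Real.pi_pos f n‖ ^ 2) ∧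
    Real.pi * ∑' n : ℤ, ‖fourierCoeffOn Real.pi_pos f n‖ ^ 2
      = ∫ x in (0:ℝ)..Real.pi, ‖f x‖ ^ 2 := by
  set F := periodicLift hf hper with hF
  set FL := ContinuousMap.toLp (E := ℂ) 2 haarAddCircle ℂ F with hFL
  have hcoeff : ∀ n : ℤ, fourierCoeff (↑↑FL : AddCircle Real.pi → ℂ) n = fourierCoeffOn Real.pi_pos f n := by
    intro n; rw [hFL, fourierCoeff_toLp, fourierCoeff_periodicLift]
  have hsum : Summable (fun n : ℤ => ‖fourierCoeffOn Real.pi_pos f n‖ ^ 2) := by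
    have h1 := (lp.memℓp (fourierBasis.repr FL)).summable (by norm_num)
    refine h1.congr fun n => ?_
    rw [fourierBasis_repr, hcoeff n]
    rw [ENNReal.toReal_ofNat, Real.rpow_two]
  have hpar := tsum_sq_fourierCoeff FL
  simp only [hcoeff] at hpar
  have hae : ∫ t, ‖(↑↑FL : AddCircle Real.pi → ℂ) t‖ ^ 2 ∂haarAddCircle
      = ∫ t, ‖F t‖ ^ 2 ∂haarAddCircle := by
    refine integral_congr_ae ?_
    filter_upwards [ContinuousMap.coeFn_toLp (E := ℂ) (p := 2) haarAddCircle (𝕜 := ℂ) F] with t ht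
    rw [ht]
  have hvol : ∫ t : AddCircle Real.pi, ‖F t‖ ^ 2 ∂(volume)
      = Real.pi * ∫ t : AddCircle Real.pi, ‖F t‖ ^ 2 ∂haarAddCircle := by
    rw [volume_eq_smul_haarAddCircle, integral_smul_measure, ENNReal.toReal_ofReal Real.pi_pos.le,
      smul_eq_mul]
  have hint : ∫ x in (0:ℝ)..Real.pi, ‖f x‖ ^ 2
      = ∫ t : AddCircle Real.pi, ‖F t‖ ^ 2 ∂(volume) := by
    rw [← AddCircle.intervalIntegral_preimage Real.pi 0 (fun t => ‖F t‖ ^ 2)]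
    simp only [zero_add]
    apply intervalIntegral.integral_congr
    intro x _
    show ‖f x‖ ^ 2 = ‖F ↑x‖ ^ 2
    rw [hF, periodicLift_coe]
  refine ⟨hsum, ?_⟩
  rw [hint, hvol, ← hae, ← hpar]

lemma wirtinger_eq {g : ℝ → ℝ} (hg : ContDiff ℝ 1 g) (hper : Function.Periodic g Real.pi)
    (hmean : ∫ x in (0:ℝ)..Real.pi, g x = 0)
    (hineq : (∫ x in (0:ℝ)..Real.pi, ((deriv g x) ^ 2 - 4 * (g x) ^ 2)) ≤ 0) :
    ∃ p q : ℝ, ∀ x, g x = p * Real.cos (2 * x) + q * Real.sin (2 * x) := by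
  have hgd : ∀ x, HasDerivAt g (deriv g x) x :=
    fun x => ((contDiff_one_iff_deriv.mp hg).1 x).hasDerivAt
  have hg'c : Continuous (deriv g) := (contDiff_one_iff_deriv.mp hg).2
  have hgc : Continuous g := hg.continuous
  set G : ℝ → ℂ := fun x => Complex.ofReal (g x) with hGdef
  set G' : ℝ → ℂ := fun x => Complex.ofReal (deriv g x) with hG'def
  have hGc : Continuous G := Complex.continuous_ofReal.comp hgc
  have hG'c : Continuous G' := Complex.continuous_ofReal.comp hg'c
  have hg'per : Function.Periodic (deriv g) Real.pi := by
    intro x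
    have h1 := deriv_comp_add_const g Real.pi x
    have h2 : (fun y => g (y + Real.pi)) = g := funext fun y => hper y
    rw [h2] at h1
    exact h1.symm
  have hGper : Function.Periodic G Real.pi := fun x => by simp [hGdef, hper x]
  have hG'per : Function.Periodic G' Real.pi := fun x => by simp [hG'def, hg'per x]
  set c : ℤ → ℂ := fourierCoeffOn Real.pi_pos G with hcdef
  set d : ℤ → ℂ := fourierCoeffOn Real.pi_pos G' with hddef
  -- coefficient relation
  have hrel : ∀ n : ℤ, n ≠ 0 → d n = 2 * Complex.I * n * c n := by
    intro n hn
    have hGd : ∀ x, HasDerivAt G (G' x) x := fun x => (hgd x).ofReal_comp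
    have hint : IntervalIntegrable G' volume 0 Real.pi := hG'c.intervalIntegrable 0 Real.pi
    have key := fourierCoeffOn_of_hasDerivAt Real.pi_pos hn (fun x _ => hGd x) hint
    have hgpi : g Real.pi = g 0 := by simpa using hper 0
    have hGpi : G Real.pi = G 0 := by simp [hGdef, hgpi]
    rw [hGpi] at key
    simp only [sub_self, mul_zero, zero_sub, Complex.ofReal_zero, sub_zero] at key
    have hπ : (Real.pi : ℂ) ≠ 0 := Complex.ofReal_ne_zero.mpr Real.pi_ne_zero
    have hn' : (n : ℂ) ≠ 0 := Int.cast_ne_zero.mpr hn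
    rw [hcdef, hddef, key]
    field_simp
  -- zeroth coefficients
  have hc0 : c 0 = 0 := by
    rw [hcdef, fourierCoeffOn_eq_integral]
    simp only [neg_zero, fourier_zero, one_smul, sub_zero, hGdef]
    rw [intervalIntegral.integral_ofReal, hmean]
    simp
  have hd0 : d 0 = 0 := by
    rw [hddef, fourierCoeffOn_eq_integral]
    simp only [neg_zero, fourier_zero, one_smul, sub_zero, hG'def]
    rw [intervalIntegral.integral_ofReal]
    have : ∫ x in (0:ℝ)..Real.pi, deriv g x = g Real.pi - g 0 :=
      intervalIntegral.integral_deriv_eq_sub (fun x _ => (hgd x).differentiableAt)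
        (hg'c.intervalIntegrable 0 Real.pi)
    rw [this]
    have hgpi : g Real.pi = g 0 := by simpa using hper 0
    simp [hgpi]
  -- Parseval
  obtain ⟨hsA, hA⟩ := parseval_aux hGc hGper
  obtain ⟨hsB, hB⟩ := parseval_aux hG'c hG'per
  have hnormG : ∀ x : ℝ, ‖G x‖ ^ 2 = g x ^ 2 := by
    intro x; rw [hGdef]; simp [Complex.norm_real, sq_abs]
  have hnormG' : ∀ x : ℝ, ‖G' x‖ ^ 2 = deriv g x ^ 2 := by
    intro x; rw [hG'def]; simp [Complex.norm_real, sq_abs]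
  rw [intervalIntegral.integral_congr (fun x _ => hnormG x)] at hA
  rw [intervalIntegral.integral_congr (fun x _ => hnormG' x)] at hB
  -- the inequality means B ≤ 4 A
  have hi1 : IntervalIntegrable (fun x => deriv g x ^ 2) volume 0 Real.pi :=
    (hg'c.pow 2).intervalIntegrable 0 Real.pi
  have hi2 : IntervalIntegrable (fun x => 4 * g x ^ 2) volume 0 Real.pi :=
    (continuous_const.mul (hgc.pow 2)).intervalIntegrable 0 Real.pi
  have hsplit : (∫ x in (0:ℝ)..Real.pi, ((deriv g x) ^ 2 - 4 * (g x) ^ 2))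
      = (∫ x in (0:ℝ)..Real.pi, deriv g x ^ 2) - ∫ x in (0:ℝ)..Real.pi, 4 * g x ^ 2 :=
    intervalIntegral.integral_sub hi1 hi2
  have h4 : (∫ x in (0:ℝ)..Real.pi, 4 * g x ^ 2) = 4 * ∫ x in (0:ℝ)..Real.pi, g x ^ 2 :=
    intervalIntegral.integral_const_mul 4 _
  have hBA : ∑' n : ℤ, ‖d n‖ ^ 2 ≤ 4 * ∑' n : ℤ, ‖c n‖ ^ 2 := by
    rw [hsplit, h4, ← hA, ← hB] at hineq
    nlinarith [Real.pi_pos]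
  -- norm relation
  have hnabs : ∀ n : ℤ, ‖d n‖ ^ 2 = 4 * (n : ℝ) ^ 2 * ‖c n‖ ^ 2 := by
    intro n
    rcases eq_or_ne n 0 with rfl | hn
    · simp [hd0]
    · rw [hrel n hn]
      rw [norm_mul, norm_mul, norm_mul, Complex.norm_I]
      have h2 : ‖(2 : ℂ)‖ = 2 := by norm_num
      have hnn : ‖(n : ℂ)‖ ^ 2 = (n : ℝ) ^ 2 := by
        rw [← Complex.ofReal_intCast, Complex.norm_real, Real.norm_eq_abs, sq_abs]
      rw [h2, mul_one, mul_pow, mul_pow, hnn]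
      ring
  -- vanishing of coefficients
  have hS : Summable (fun n : ℤ => 4 * (n : ℝ) ^ 2 * ‖c n‖ ^ 2 - 4 * ‖c n‖ ^ 2) := by
    refine Summable.sub ?_ (hsA.mul_left 4)
    exact hsB.congr fun n => (hnabs n)
  have htsum : (∑' n : ℤ, (4 * (n : ℝ) ^ 2 * ‖c n‖ ^ 2 - 4 * ‖c n‖ ^ 2)) ≤ 0 := by
    rw [Summable.tsum_sub (hsB.congr fun n => (hnabs n)) (hsA.mul_left 4)]
    rw [tsum_mul_left]
    have h1 : ∑' n : ℤ, 4 * (n : ℝ) ^ 2 * ‖c n‖ ^ 2 = ∑' n : ℤ, ‖d n‖ ^ 2 :=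
      tsum_congr fun n => (hnabs n).symm
    rw [h1]
    linarith
  have hSnn : ∀ n : ℤ, 0 ≤ 4 * (n : ℝ) ^ 2 * ‖c n‖ ^ 2 - 4 * ‖c n‖ ^ 2 := by
    intro n
    rcases eq_or_ne n 0 with rfl | hn
    · simp [hc0]
    · have hz : (1 : ℤ) ≤ n ^ 2 := by
        rcases lt_or_ge n 0 with h | h
        · nlinarith
        · have : 1 ≤ n := by omega
          nlinarith
      have h1 : (1 : ℝ) ≤ (n : ℝ) ^ 2 := by exact_mod_cast hz
      nlinarith [sq_nonneg ‖c n‖]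
  have hczero : ∀ n : ℤ, n ≠ 1 → n ≠ -1 → c n = 0 := by
    intro n h1 hm1
    rcases eq_or_ne n 0 with rfl | hn
    · exact hc0
    · have hle : 4 * (n : ℝ) ^ 2 * ‖c n‖ ^ 2 - 4 * ‖c n‖ ^ 2 ≤ 0 :=
        le_trans (hS.le_tsum n fun j _ => hSnn j) htsum
      have heq : 4 * (n : ℝ) ^ 2 * ‖c n‖ ^ 2 - 4 * ‖c n‖ ^ 2 = 0 := le_antisymm hle (hSnn n)
      have hn2 : (4 : ℝ) ≤ (n : ℝ) ^ 2 := by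
        have hz : (4 : ℤ) ≤ n ^ 2 := by
          rcases lt_or_ge n 0 with h | h
          · have : n ≤ -2 := by omega
            nlinarith
          · have : 2 ≤ n := by omega
            nlinarith
        exact_mod_cast hz
      have : ‖c n‖ ^ 2 = 0 := by nlinarith
      have := pow_eq_zero_iff (n := 2) (by norm_num) |>.mp this
      exact norm_eq_zero.mp this
  -- reconstruction of g from surviving coefficients
  set F := periodicLift hGc hGper with hFdef
  have hcoF : ∀ n, fourierCoeff (⇑F) n = c n := fun n => fourierCoeff_periodicLift hGc hGper n
  have hsummable : Summable (fourierCoeff (⇑F)) := by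
    refine summable_of_ne_finset_zero (s := ({1, -1} : Finset ℤ)) fun n hn => ?_
    simp only [Finset.mem_insert, Finset.mem_singleton] at hn
    push_neg at hn
    rw [hcoF, hczero n hn.1 hn.2]
  refine ⟨(c 1).re + (c (-1)).re, (c (-1)).im - (c 1).im, fun x => ?_⟩
  have key : G x = c 1 * fourier 1 (↑x : AddCircle Real.pi)
      + c (-1) * fourier (-1) (↑x : AddCircle Real.pi) := by
    have hp1 := has_pointwise_sum_fourier_series_of_summable hsummable (↑x : AddCircle Real.pi)
    have hzero : ∀ n : ℤ, n ∉ ({1, -1} : Finset ℤ) →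
        fourierCoeff (⇑F) n • fourier n (↑x : AddCircle Real.pi) = 0 := by
      intro n hn
      simp only [Finset.mem_insert, Finset.mem_singleton] at hn
      push_neg at hn
      rw [hcoF, hczero n hn.1 hn.2, zero_smul]
    have hp2 := hasSum_sum_of_ne_finset_zero (L := SummationFilter.unconditional ℤ) (s := ({1, -1} : Finset ℤ)) hzero
    have huniq := hp1.unique hp2
    have hFx : F (↑x : AddCircle Real.pi) = G x := periodicLift_coe hGc hGper x
    rw [hFx, Finset.sum_pair (by decide : (1 : ℤ) ≠ -1)] at huniq
    rw [huniq]
    simp [hcoF, smul_eq_mul]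
  have hπ : (Real.pi : ℂ) ≠ 0 := Complex.ofReal_ne_zero.mpr Real.pi_ne_zero
  have hf1 : fourier 1 (↑x : AddCircle Real.pi)
      = Complex.exp (Complex.ofReal (2 * x) * Complex.I) := by
    rw [fourier_coe_apply]
    congr 1
    push_cast
    field_simp
  have hfm1 : fourier (-1) (↑x : AddCircle Real.pi)
      = Complex.exp (Complex.ofReal (-(2 * x)) * Complex.I) := by
    rw [fourier_coe_apply]
    congr 1
    push_cast
    field_simp
  have hre : g x = (G x).re := by simp [hGdef]
  rw [hre, key, hf1, hfm1]
  simp only [Complex.add_re, Complex.mul_re, Complex.exp_ofReal_mul_I_re,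
    Complex.exp_ofReal_mul_I_im, Real.cos_neg, Real.sin_neg]
  ring

/-- Equality case of Wirtinger's inequality: a `π`-periodic `C²` function with
`∫₀^π (μ''² − 4 μ'²) ≤ 0` is a pure second harmonic plus a constant. -/
theorem stmt_12 (μ : ℝ → ℝ) (hμ : ContDiff ℝ 2 μ)
    (hper : ∀ ψ : ℝ, μ (ψ + Real.pi) = μ ψ)
    (hineq : (∫ ψ in (0:ℝ)..Real.pi, ((deriv (deriv μ) ψ) ^ 2 - 4 * (deriv μ ψ) ^ 2)) ≤ 0) :
    ∃ a b c : ℝ, ∀ ψ : ℝ, μ ψ = a * Real.cos (2 * ψ) + b * Real.sin (2 * ψ) + c := by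
  have hμ2 : ContDiff ℝ ((1 : WithTop ℕ∞) + 1) μ := by
    have : ((1 : WithTop ℕ∞) + 1) = (2 : ℕ) := by norm_num
    rw [this]; exact_mod_cast hμ
  have hsucc := contDiff_succ_iff_deriv.mp hμ2
  have hdiff : Differentiable ℝ μ := hsucc.1
  have hg : ContDiff ℝ 1 (deriv μ) := by exact_mod_cast hsucc.2.2
  have hgc : Continuous (deriv μ) := hg.continuous
  have hper' : Function.Periodic (deriv μ) Real.pi := by
    intro x
    have h1 := deriv_comp_add_const μ Real.pi x
    have h2 : (fun y => μ (y + Real.pi)) = μ := funext fun y => hper y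
    rw [h2] at h1
    exact h1.symm
  have hmean : ∫ x in (0:ℝ)..Real.pi, deriv μ x = 0 := by
    rw [intervalIntegral.integral_deriv_eq_sub (fun x _ => hdiff x)
      (hgc.intervalIntegrable 0 Real.pi)]
    have : μ Real.pi = μ 0 := by simpa using hper 0
    simp [this]
  obtain ⟨p, q, hpq⟩ := wirtinger_eq hg hper' hmean hineq
  refine ⟨-q / 2, p / 2, μ 0 + q / 2, fun ψ => ?_⟩
  -- D := μ - Φ has zero derivative
  set Φ : ℝ → ℝ := fun x => p * Real.sin (2 * x) / 2 - q * Real.cos (2 * x) / 2 with hΦ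
  have hΦd : ∀ x, HasDerivAt Φ (p * Real.cos (2 * x) + q * Real.sin (2 * x)) x := by
    intro x
    have ht2 : HasDerivAt (fun y : ℝ => 2 * y) 2 x := by
      simpa using (hasDerivAt_id x).const_mul 2
    have hsin : HasDerivAt (fun y : ℝ => Real.sin (2 * y)) (Real.cos (2 * x) * 2) x :=
      (Real.hasDerivAt_sin (2 * x)).comp x ht2
    have hcos : HasDerivAt (fun y : ℝ => Real.cos (2 * y)) (-Real.sin (2 * x) * 2) x :=
      (Real.hasDerivAt_cos (2 * x)).comp x ht2
    have := ((hsin.const_mul p).div_const 2).sub ((hcos.const_mul q).div_const 2)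
    rw [show p * Real.cos (2 * x) + q * Real.sin (2 * x)
      = p * (Real.cos (2 * x) * 2) / 2 - q * (-Real.sin (2 * x) * 2) / 2 by ring]
    exact this
  have hDd : ∀ x, HasDerivAt (fun y => μ y - Φ y) 0 x := by
    intro x
    have hμd : HasDerivAt μ (p * Real.cos (2 * x) + q * Real.sin (2 * x)) x := by
      have := (hdiff x).hasDerivAt
      rwa [hpq x] at this
    have h := hμd.sub (hΦd x)
    rw [sub_self] at h
    exact h
  have hconst : ∀ x : ℝ, μ x - Φ x = μ 0 - Φ 0 := by
    intro x
    have : Differentiable ℝ (fun y => μ y - Φ y) := fun y => (hDd y).differentiableAt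
    exact is_const_of_deriv_eq_zero this (fun y => (hDd y).deriv) x 0
  have h := hconst ψ
  have hΦ0 : Φ 0 = -q / 2 := by simp [hΦ]; ring
  rw [hΦ0] at h
  have : μ ψ = Φ ψ + μ 0 + q / 2 := by linarith
  rw [this, hΦ]
  ring
end

section
/- Let d : ℝ → ℝ be a continuous function with 0 < d(ψ) < π/2 and d(ψ + π/2) = π/2 − d(ψ) for all ψ, and suppose there exist constants A ≥ 0 and c ∈ ℝ such that cos(2·d(ψ)) = A·cos(2ψ) + c for all ψ. Then c = 0 and 0 ≤ A < 1. -/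
open Real

/-- In the representation `cos (2 d(ψ)) = A cos (2ψ) + c`, necessarily `c = 0` and
`0 ≤ A < 1`. -/
theorem stmt_14 (d : ℝ → ℝ) (hd : Continuous d)
    (hrange : ∀ ψ : ℝ, 0 < d ψ ∧ d ψ < Real.pi / 2)
    (hdsym : ∀ ψ : ℝ, d (ψ + Real.pi / 2) = Real.pi / 2 - d ψ)
    (A c : ℝ) (hA : 0 ≤ A)
    (hrep : ∀ ψ : ℝ, Real.cos (2 * d ψ) = A * Real.cos (2 * ψ) + c) :
    c = 0 ∧ 0 ≤ A ∧ A < 1 := by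
  have hc : c = 0 := by
    have h0 := hrep 0
    have h1 := hrep (Real.pi / 2)
    rw [show Real.pi/2 = 0 + Real.pi/2 by ring, hdsym 0] at h1
    simp at h1 h0
    have : Real.cos (2 * (Real.pi / 2 - d 0)) = - Real.cos (2 * d 0) := by
      rw [show 2 * (Real.pi / 2 - d 0) = Real.pi - 2 * d 0 by ring, Real.cos_pi_sub]
    rw [this] at h1
    rw [show 2 * (Real.pi / 2) = Real.pi by ring, Real.cos_pi] at h1
    linarith
  refine ⟨hc, hA, ?_⟩
  have h0 := hrep 0
  simp [hc] at h0
  have hd0 := hrange 0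
  have : Real.cos (2 * d 0) < 1 := by
    have hs : 0 < Real.sin (d 0) := Real.sin_pos_of_pos_of_lt_pi hd0.1 (by linarith [hd0.2, Real.pi_pos])
    have hpyth := Real.sin_sq_add_cos_sq (d 0)
    rw [Real.cos_two_mul]
    nlinarith
  linarith
end
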